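/- In End(EPol_n), let T_1 denote the extended Demazure operator ∂_1 and ω_1 left multiplication by ω_1. Then T_1 ω_1 T_1 ω_1 + ω_1 T_1 ω_1 T_1 = 0. -/

import Mathlib

open MvPolynomial
open scoped TensorProduct

noncomputable section

abbrev EPol (k : Type) [Field k] (n : ℕ) :=
  TensorProduct k (MvPolynomial (Fin n) k) (ExteriorAlgebra k (Fin n → k))

def XE (k : Type) [Field k] (n : ℕ) (i : Fin n) : EPol k n := (X i) ⊗ₜ[k] 1

def wE (k : Type) [Field k] (n : ℕ) (i : Fin n) : EPol k n :=
  1 ⊗ₜ[k] (ExteriorAlgebra.ι k (Pi.single i (1 : k)))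

def fr (n r : ℕ) (hr : r + 1 < n) : Fin n := ⟨r, Nat.lt_of_succ_lt hr⟩
def fr1 (n r : ℕ) (hr : r + 1 < n) : Fin n := ⟨r + 1, hr⟩


set_option maxHeartbeats 1600000 in
set_option synthInstance.maxHeartbeats 1000000 in
/-- In `End(EPol_n)`, with `T_1 = ∂_1` the extended Demazure operator (sending `ω_1` to
`-ω_2` and `ω_i` to `0` for `i ≥ 2`) and `ω_1` left multiplication by `ω_1`:
`T_1 ω_1 T_1 ω_1 + ω_1 T_1 ω_1 T_1 = 0`. -/
theorem stmt_7 (k : Type) [Field k] (n : ℕ) (hn : 1 < n)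
    (σ : EPol k n →ₐ[k] EPol k n)
    (hσX : ∀ i : Fin n, σ (XE k n i) = XE k n (Equiv.swap (fr n 0 hn) (fr1 n 0 hn) i))
    (hσω : ∀ i : Fin n, i ≠ fr n 0 hn → σ (wE k n i) = wE k n i)
    (hσωr : σ (wE k n (fr n 0 hn)) =
      wE k n (fr n 0 hn) + (XE k n (fr n 0 hn) - XE k n (fr1 n 0 hn)) * wE k n (fr1 n 0 hn))
    (D : EPol k n →ₗ[k] EPol k n)
    (hD : ∀ x : EPol k n, (XE k n (fr n 0 hn) - XE k n (fr1 n 0 hn)) * D x = x - σ x) :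
    ∀ x : EPol k n,
      D (wE k n (fr n 0 hn) * D (wE k n (fr n 0 hn) * x)) +
        wE k n (fr n 0 hn) * D (wE k n (fr n 0 hn) * D x) = 0 := by
  intro x
  set i0 := fr n 0 hn with hi0
  set i1 := fr1 n 0 hn with hi1
  have hne : i0 ≠ i1 := by
    simp [hi0, hi1, fr, fr1, Fin.ext_iff]
  set p : MvPolynomial (Fin n) k := X i0 - X i1 with hp
  have hpne : p ≠ 0 := sub_ne_zero.mpr (fun h => hne (MvPolynomial.X_injective h))
  set ω := wE k n i0 with hωdef
  set ω₂ := wE k n i1 with hω₂def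
  have hsd : ∀ (q : MvPolynomial (Fin n) k) (y : EPol k n),
      q • y = algebraMap (MvPolynomial (Fin n) k) (EPol k n) q * y :=
    fun q y => Algebra.smul_def q y
  have e0 : algebraMap (MvPolynomial (Fin n) k) (EPol k n) p = XE k n i0 - XE k n i1 := by
    simp [XE, hp, map_sub, Algebra.TensorProduct.algebraMap_apply, TensorProduct.sub_tmul]
  -- δ * y = p • y
  have hδ : ∀ y : EPol k n, (XE k n i0 - XE k n i1) * y = p • y := by
    intro y
    rw [← e0, ← hsd]
  haveI hfree : Module.Free (MvPolynomial (Fin n) k) (EPol k n) :=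
    Module.Free.tensor
  haveI hnz : Module.IsTorsionFree (MvPolynomial (Fin n) k) (EPol k n) :=
    inferInstance
  have hinj : ∀ y : EPol k n, p • y = 0 → y = 0 := by
    intro y hy
    rcases smul_eq_zero.mp hy with h | h
    · exact absurd h hpne
    · exact h
  -- rewrite hypotheses with smul
  have hD' : ∀ y : EPol k n, p • D y = y - σ y := fun y => by rw [← hδ, hD]
  have hσω₂ : σ ω₂ = ω₂ := hσω i1 (Ne.symm hne)
  have hσδ : σ (algebraMap (MvPolynomial (Fin n) k) (EPol k n) p)
      = - algebraMap (MvPolynomial (Fin n) k) (EPol k n) p := by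
    rw [e0, map_sub, hσX, hσX, Equiv.swap_apply_left, Equiv.swap_apply_right]
    abel
  have hσsmul : ∀ y : EPol k n, σ (p • y) = - (p • σ y) := by
    intro y
    rw [hsd, map_mul, hσδ, hsd]
    exact neg_mul (algebraMap (MvPolynomial (Fin n) k) (EPol k n) p) (σ y)
  have hσωr' : σ ω = ω + p • ω₂ := by rw [hσωr, hδ]
  have hσσω : σ (σ ω) = ω := by
    rw [hσωr', map_add, hσωr', hσsmul, hσω₂]
    abel
  have hDσ : ∀ y : EPol k n, p • σ (D y) = σ (σ y) - σ y := by
    intro y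
    have h1 := congrArg σ (hD' y)
    rw [hσsmul, map_sub] at h1
    have h2 := congrArg Neg.neg h1
    simpa [neg_sub] using h2
  -- exterior relations
  have hιsq : ∀ i : Fin n, wE k n i * wE k n i = 0 := by
    intro i
    simp [wE, Algebra.TensorProduct.tmul_mul_tmul, ExteriorAlgebra.ι_sq_zero]
  have ha : ω * ω = 0 := hιsq i0
  have hc : ω₂ * ω₂ = 0 := hιsq i1
  have hab : ω * ω₂ + ω₂ * ω = 0 := by
    rw [hωdef, hω₂def]
    simp only [wE, Algebra.TensorProduct.tmul_mul_tmul, one_mul]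
    rw [← TensorProduct.tmul_add, ExteriorAlgebra.ι_add_mul_swap, TensorProduct.tmul_zero]
  have hba : ω₂ * ω = - (ω * ω₂) := eq_neg_of_add_eq_zero_left (by rwa [add_comm] at hab)
  -- σω products
  have hb : σ ω * σ ω = 0 := by
    rw [hσωr']
    simp only [add_mul, mul_add, smul_mul_assoc, mul_smul_comm, ha, hc, hba, smul_zero,
      smul_neg, zero_add, add_zero]
    abel
  have hab2 : ω * σ ω + σ ω * ω = 0 := by
    rw [hσωr']
    simp only [add_mul, mul_add, smul_mul_assoc, mul_smul_comm, ha, hba, smul_zero,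
      smul_neg, zero_add, add_zero]
    abel
  have hab3 : σ ω * ω = - (ω * σ ω) := eq_neg_of_add_eq_zero_left (by rwa [add_comm] at hab2)
  -- main computation
  have e2 : p • (p • D (ω * D (ω * x)))
      = ω * (ω * x - σ ω * σ x) - σ ω * (ω * σ (σ x) - σ ω * σ x) := by
    calc p • (p • D (ω * D (ω * x)))
        = p • (ω * D (ω * x) - σ (ω * D (ω * x))) := by rw [hD']
      _ = p • (ω * D (ω * x)) - p • (σ ω * σ (D (ω * x))) := by
          rw [map_mul σ ω (D (ω * x)), smul_sub]
      _ = ω * (p • D (ω * x)) - σ ω * (p • σ (D (ω * x))) := by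
          rw [mul_smul_comm, mul_smul_comm]
      _ = ω * (ω * x - σ (ω * x)) - σ ω * (σ (σ (ω * x)) - σ (ω * x)) := by
          rw [hD', hDσ]
      _ = ω * (ω * x - σ ω * σ x) - σ ω * (ω * σ (σ x) - σ ω * σ x) := by
          rw [map_mul σ ω x, map_mul σ (σ ω) (σ x), hσσω]
  have f2 : p • (p • (ω * D (ω * D x)))
      = ω * (ω * (x - σ x) - σ ω * (σ (σ x) - σ x)) := by
    calc p • (p • (ω * D (ω * D x)))
        = p • (ω * (p • D (ω * D x))) := by rw [mul_smul_comm]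
      _ = p • (ω * (ω * D x - σ (ω * D x))) := by rw [hD']
      _ = ω * (p • (ω * D x - σ (ω * D x))) := by rw [mul_smul_comm]
      _ = ω * (p • (ω * D x) - p • (σ ω * σ (D x))) := by
          rw [map_mul σ ω (D x), smul_sub]
      _ = ω * (ω * (p • D x) - σ ω * (p • σ (D x))) := by
          rw [mul_smul_comm, mul_smul_comm]
      _ = ω * (ω * (x - σ x) - σ ω * (σ (σ x) - σ x)) := by rw [hD', hDσ]
  have key : p • (p • (D (ω * D (ω * x)) + ω * D (ω * D x))) = 0 := by
    rw [smul_add, smul_add, e2, f2]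
    have ha' : ∀ z : EPol k n, ω * (ω * z) = 0 := fun z => by rw [← mul_assoc, ha, zero_mul]
    have hb' : ∀ z : EPol k n, σ ω * (σ ω * z) = 0 := fun z => by
      rw [← mul_assoc, hb, zero_mul]
    have habz : ∀ z : EPol k n, σ ω * (ω * z) = -(ω * (σ ω * z)) := fun z => by
      rw [← mul_assoc, ← mul_assoc, hab3]
      exact neg_mul (ω * σ ω) z
    simp only [mul_sub, ha', hb', habz]
    abel
  exact hinj _ (hinj _ key)
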